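/- Let N ≥ 2 and K ≥ 1, and let (w, P) be a configuration with confidence e. Then the Gini index impurity satisfies ∑_{k ∈ Fin K} w k · ∑_{i ∈ Fin N} P k i · (1 − P k i) ≤ (1 − e)·(1 + e − (1−e)/(N−1)); in particular it is at most 1 − e². (Paper's Theorem 1 specialized to the Gini impurity, together with the identity u(e)/l(e) = 1 + e − (1−e)/(N−1) from Theorem 6.) -/
import Mathlib

open Finset

/-- The maximum of a real-valued vector over the finite index set `Fin N` (`N > 0`). -/
noncomputable def colMax {N : ℕ} (hN : 0 < N) (v : Fin N → ℝ) : ℝ :=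
  Finset.univ.sup' (Finset.univ_nonempty_iff.mpr ⟨⟨0, hN⟩⟩) v

/-- Weighted Jensen for the square function. -/
lemma sq_sum_le_sum_sq {K : ℕ} (w x : Fin K → ℝ) (hw : ∀ k, 0 ≤ w k)
    (hws : ∑ k, w k = 1) : (∑ k, w k * x k) ^ 2 ≤ ∑ k, w k * x k ^ 2 := by
  have h := Finset.sum_mul_sq_le_sq_mul_sq Finset.univ
    (fun k => Real.sqrt (w k)) (fun k => Real.sqrt (w k) * x k)
  have h1 : ∀ k : Fin K, Real.sqrt (w k) * (Real.sqrt (w k) * x k) = w k * x k := by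
    intro k
    rw [← mul_assoc, Real.mul_self_sqrt (hw k)]
  have h2 : ∀ k : Fin K, Real.sqrt (w k) ^ 2 = w k := fun k => Real.sq_sqrt (hw k)
  have h3 : ∀ k : Fin K, (Real.sqrt (w k) * x k) ^ 2 = w k * x k ^ 2 := by
    intro k; rw [mul_pow, h2]
  simp only [h1, h2, h3, hws, one_mul] at h
  exact h

/-- Row-wise bound: the sum of squares is at least `m² + (1-m)²/(N-1)`. -/
lemma row_bound {N : ℕ} (hN : 2 ≤ N) (p : Fin N → ℝ) (hp : ∀ i, 0 ≤ p i)
    (hps : ∑ i, p i = 1) :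
    (colMax (by omega) p) ^ 2 + (1 - colMax (by omega) p) ^ 2 / ((N : ℝ) - 1)
      ≤ ∑ i, p i ^ 2 := by
  have hN0 : (0 : ℕ) < N := by omega
  set m := colMax hN0 p with hm
  obtain ⟨i₀, _, hi₀⟩ := Finset.exists_mem_eq_sup' (Finset.univ_nonempty_iff.mpr ⟨⟨0, hN0⟩⟩) p
  have hmi : m = p i₀ := hi₀
  have hcard : (Finset.univ.erase i₀).card = N - 1 := by
    rw [Finset.card_erase_of_mem (Finset.mem_univ i₀), Finset.card_univ, Fintype.card_fin]
  have hsum : ∑ i ∈ Finset.univ.erase i₀, p i = 1 - m := by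
    have := Finset.add_sum_erase Finset.univ p (Finset.mem_univ i₀)
    rw [hps] at this
    rw [hmi]; linarith
  have hcs : (∑ i ∈ Finset.univ.erase i₀, p i) ^ 2
      ≤ (Finset.univ.erase i₀).card * ∑ i ∈ Finset.univ.erase i₀, p i ^ 2 :=
    sq_sum_le_card_mul_sum_sq
  rw [hsum, hcard] at hcs
  have hc : ((N : ℝ) - 1) > 0 := by
    have : (2 : ℝ) ≤ N := by exact_mod_cast hN
    linarith
  have hcast : ((N - 1 : ℕ) : ℝ) = (N : ℝ) - 1 := by
    have : (1 : ℕ) ≤ N := by omega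
    push_cast [this]; ring
  rw [hcast] at hcs
  have hdiv : (1 - m) ^ 2 / ((N : ℝ) - 1) ≤ ∑ i ∈ Finset.univ.erase i₀, p i ^ 2 := by
    rw [div_le_iff₀ hc] at *
    nlinarith [Finset.sum_nonneg (fun i (_ : i ∈ Finset.univ.erase i₀) => sq_nonneg (p i))]
  have hsplit := Finset.add_sum_erase Finset.univ (fun i => p i ^ 2) (Finset.mem_univ i₀)
  calc m ^ 2 + (1 - m) ^ 2 / ((N : ℝ) - 1)
      ≤ p i₀ ^ 2 + ∑ i ∈ Finset.univ.erase i₀, p i ^ 2 := by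
        rw [hmi] at hdiv ⊢; linarith
    _ = ∑ i, p i ^ 2 := hsplit

/-- Paper's Theorem 1 specialized to the Gini impurity, together with the identity
`u(e)/l(e) = 1 + e - (1-e)/(N-1)` from Theorem 6: the Gini index impurity is at most
`(1 - e) * (1 + e - (1-e)/(N-1))`, in particular at most `1 - e²`. -/
theorem gini_impurity_upper_bound (N K : ℕ) (hN : 2 ≤ N) (hK : 1 ≤ K)
    (w : Fin K → ℝ) (hw : ∀ k, 0 ≤ w k) (hws : ∑ k, w k = 1)
    (P : Fin K → Fin N → ℝ) (hP : ∀ k i, 0 ≤ P k i) (hPs : ∀ k, ∑ i, P k i = 1)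
    (e : ℝ) (he : e = ∑ k, w k * colMax (by omega) (P k)) :
    (∑ k, w k * ∑ i, P k i * (1 - P k i)) ≤
        (1 - e) * (1 + e - (1 - e) / ((N : ℝ) - 1)) ∧
      (∑ k, w k * ∑ i, P k i * (1 - P k i)) ≤ 1 - e ^ 2 := by
  have hN0 : (0 : ℕ) < N := by omega
  have hc : ((N : ℝ) - 1) > 0 := by
    have : (2 : ℝ) ≤ N := by exact_mod_cast hN
    linarith
  set m : Fin K → ℝ := fun k => colMax hN0 (P k) with hmdef
  -- rewrite each inner sum
  have hrow : ∀ k, (∑ i, P k i * (1 - P k i)) = 1 - ∑ i, P k i ^ 2 := by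
    intro k
    have : (∑ i, P k i * (1 - P k i)) = (∑ i, P k i) - ∑ i, P k i ^ 2 := by
      rw [← Finset.sum_sub_distrib]; congr 1; ext i; ring
    rw [this, hPs k]
  -- per-row Gini bound
  have hrowb : ∀ k, (∑ i, P k i * (1 - P k i))
      ≤ 1 - (m k ^ 2 + (1 - m k) ^ 2 / ((N : ℝ) - 1)) := by
    intro k
    rw [hrow k]
    have := row_bound hN (P k) (hP k) (hPs k)
    linarith
  -- sum over k with weights
  have hstep : (∑ k, w k * ∑ i, P k i * (1 - P k i))
      ≤ ∑ k, w k * (1 - (m k ^ 2 + (1 - m k) ^ 2 / ((N : ℝ) - 1))) := by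
    apply Finset.sum_le_sum
    intro k _
    exact mul_le_mul_of_nonneg_left (hrowb k) (hw k)
  have hsq1 : e ^ 2 ≤ ∑ k, w k * m k ^ 2 := by
    rw [he]; exact sq_sum_le_sum_sq w m hw hws
  have hsq2 : (1 - e) ^ 2 ≤ ∑ k, w k * (1 - m k) ^ 2 := by
    have h := sq_sum_le_sum_sq w (fun k => 1 - m k) hw hws
    have h2 : (∑ k, w k * (1 - m k)) = 1 - e := by
      have h3 : (∑ k, w k * (1 - m k)) = (∑ k, w k) - ∑ k, w k * m k := by
        rw [← Finset.sum_sub_distrib]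
        exact Finset.sum_congr rfl fun k _ => by ring
      rw [h3, hws, he]
    rwa [h2] at h
  have hexp : (∑ k, w k * (1 - (m k ^ 2 + (1 - m k) ^ 2 / ((N : ℝ) - 1))))
      = (∑ k, w k) - (∑ k, w k * m k ^ 2)
        - (∑ k, w k * (1 - m k) ^ 2) / ((N : ℝ) - 1) := by
    rw [Finset.sum_div, ← Finset.sum_sub_distrib, ← Finset.sum_sub_distrib]
    congr 1; ext k; field_simp; ring
  have hdivle : (1 - e) ^ 2 / ((N : ℝ) - 1)
      ≤ (∑ k, w k * (1 - m k) ^ 2) / ((N : ℝ) - 1) := by gcongr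
  have hmain : (∑ k, w k * ∑ i, P k i * (1 - P k i))
      ≤ 1 - e ^ 2 - (1 - e) ^ 2 / ((N : ℝ) - 1) := by
    rw [hexp, hws] at hstep
    linarith
  constructor
  · have : (1 - e) * (1 + e - (1 - e) / ((N : ℝ) - 1))
        = 1 - e ^ 2 - (1 - e) ^ 2 / ((N : ℝ) - 1) := by
      field_simp; ring
    rw [this]; exact hmain
  · have : 0 ≤ (1 - e) ^ 2 / ((N : ℝ) - 1) := by positivity
    linarith
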